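/- For a Coxeter system (W,S), the gallery distance between chambers c and c′ of the Coxeter complex equals the number of walls separating c and c′; consequently the gallery distance is a kernel of negative type on the set of chambers. -/

import Mathlib

open Set


open Set List

noncomputable section CoxAux

namespace CoxAux

open CoxeterSystem

variable {B W : Type*} [Group W] {M : CoxeterMatrix B} (cs : CoxeterSystem M W)

local prefix:100 "s" => cs.simple
local prefix:100 "π" => cs.wordProd
local prefix:100 "ℓ" => cs.length

attribute [local instance] Classical.propDecidable

/-- The basic involution of the parity representation. -/
def sigmaFun (i : B) : W × ℤˣ → W × ℤˣ :=
  fun x => (s i * x.1 * s i, if x.1 = s i then -x.2 else x.2)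

lemma sigmaFun_involutive (i : B) : Function.Involutive (sigmaFun cs i) := by
  intro x
  simp only [sigmaFun]
  have h1 : s i * (s i * x.1 * s i) * s i = x.1 := by
    have := cs.simple_mul_simple_self i
    calc s i * (s i * x.1 * s i) * s i = (s i * s i) * x.1 * (s i * s i) := by group
    _ = x.1 := by rw [this]; group
  have h0 : s i * s i * s i = s i := by
    rw [cs.simple_mul_simple_self i, one_mul]
  have h2 : (s i * x.1 * s i = s i) ↔ x.1 = s i := by
    constructor
    · intro h
      have h' := congrArg (fun y => s i * y * s i) h
      rw [h1] at h'
      rw [h', h0]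
    · intro h
      rw [h, h0]
  rw [Prod.ext_iff]
  refine ⟨h1, ?_⟩
  by_cases hx : x.1 = s i
  · simp only [if_pos (h2.mpr hx), if_pos hx, neg_neg]
  · simp only [if_neg (fun hc => hx (h2.mp hc)), if_neg hx]

/-- The basic involution, as a permutation. -/
def sigma (i : B) : Equiv.Perm (W × ℤˣ) := (sigmaFun_involutive cs i).toPerm

lemma sigma_apply (i : B) (x : W × ℤˣ) :
    sigma cs i x = (s i * x.1 * s i, if x.1 = s i then -x.2 else x.2) := rfl

lemma conj_pow_eq_iff (p t X : W) (k : ℕ) :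
    p ^ k * t * (p⁻¹) ^ k = X ↔ t = (p⁻¹) ^ k * X * p ^ k := by
  constructor
  · rintro rfl; group
  · rintro rfl; group

lemma conj_simple_eq_iff (i : B) (Y Z : W) : s i * Y * s i = Z ↔ Y = s i * Z * s i := by
  have h0 : s i * s i = 1 := cs.simple_mul_simple_self i
  constructor
  · rintro rfl
    calc Y = (s i * s i) * Y * (s i * s i) := by rw [h0]; group
    _ = s i * (s i * Y * s i) * s i := by group
  · rintro rfl
    calc s i * (s i * Z * s i) * s i = (s i * s i) * Z * (s i * s i) := by group
    _ = Z := by rw [h0]; group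

lemma sigma_pow_apply (i i' : B) (k : ℕ) (t : W) (ε : ℤˣ) :
    ((sigma cs i * sigma cs i') ^ k) (t, ε) =
      ((s i * s i') ^ k * t * (s i' * s i) ^ k,
        ε * ∏ n ∈ Finset.range (2 * k),
          (if (s i' * s i) ^ n * s i' = t then (-1 : ℤˣ) else 1)) := by
  have hbp : ∀ n : ℕ, s i' * (s i * s i') ^ n = (s i' * s i) ^ n * s i' := by
    intro n
    induction n with
    | zero => simp
    | succ n ih =>
      rw [pow_succ, ← mul_assoc, ih, pow_succ]
      group
  have hq : (s i' * s i) = (s i * s i')⁻¹ := by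
    rw [mul_inv_rev, cs.inv_simple, cs.inv_simple]
  have key : ∀ (k : ℕ) (X tt : W), ((s i * s i') ^ k * tt * (s i' * s i) ^ k = X) ↔
      (tt = (s i' * s i) ^ k * X * (s i * s i') ^ k) := by
    intro k X tt
    rw [hq]
    exact conj_pow_eq_iff _ _ _ _
  have e1 : ∀ k : ℕ, (s i' * s i) ^ k * s i' * (s i * s i') ^ k
      = (s i' * s i) ^ (2 * k) * s i' := by
    intro k
    calc (s i' * s i) ^ k * s i' * (s i * s i') ^ k
        = (s i' * s i) ^ k * (s i' * (s i * s i') ^ k) := by group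
      _ = (s i' * s i) ^ k * ((s i' * s i) ^ k * s i') := by rw [hbp]
      _ = (s i' * s i) ^ (2 * k) * s i' := by rw [← mul_assoc, ← pow_add, two_mul]
  have e2 : ∀ k : ℕ, (s i' * s i) ^ k * (s i' * s i * s i') * (s i * s i') ^ k
      = (s i' * s i) ^ (2 * k + 1) * s i' := by
    intro k
    calc (s i' * s i) ^ k * (s i' * s i * s i') * (s i * s i') ^ k
        = ((s i' * s i) ^ k * (s i' * s i)) * (s i' * (s i * s i') ^ k) := by group
      _ = ((s i' * s i) ^ k * (s i' * s i)) * ((s i' * s i) ^ k * s i') := by rw [hbp]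
      _ = (((s i' * s i) ^ k * (s i' * s i)) * (s i' * s i) ^ k) * s i' := by group
      _ = (s i' * s i) ^ (2 * k + 1) * s i' := by
          rw [← pow_succ, ← pow_add, show k + 1 + k = 2 * k + 1 from by omega]
  induction k with
  | zero => simp
  | succ k ih =>
    have hin : ((s i * s i') ^ k * t * (s i' * s i) ^ k = s i') ↔
        ((s i' * s i) ^ (2 * k) * s i' = t) := by
      rw [key k (s i') t, e1 k, eq_comm]
    have hout : (s i' * ((s i * s i') ^ k * t * (s i' * s i) ^ k) * s i' = s i) ↔
        ((s i' * s i) ^ (2 * k + 1) * s i' = t) := by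
      rw [conj_simple_eq_iff cs i' _ (s i), key k (s i' * s i * s i') t, e2 k, eq_comm]
    rw [pow_succ', Equiv.Perm.mul_apply, ih, Equiv.Perm.mul_apply, sigma_apply,
      sigma_apply]
    simp only []
    rw [Prod.ext_iff]
    constructor
    · show s i * (s i' * ((s i * s i') ^ k * t * (s i' * s i) ^ k) * s i') * s i
        = (s i * s i') ^ (k + 1) * t * (s i' * s i) ^ (k + 1)
      rw [pow_succ' (s i * s i') k, pow_succ (s i' * s i) k]
      group
    · show (if s i' * ((s i * s i') ^ k * t * (s i' * s i) ^ k) * s i' = s i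
          then -(if (s i * s i') ^ k * t * (s i' * s i) ^ k = s i'
            then -(ε * ∏ n ∈ Finset.range (2 * k),
              (if (s i' * s i) ^ n * s i' = t then (-1 : ℤˣ) else 1))
            else (ε * ∏ n ∈ Finset.range (2 * k),
              (if (s i' * s i) ^ n * s i' = t then (-1 : ℤˣ) else 1)))
          else (if (s i * s i') ^ k * t * (s i' * s i) ^ k = s i'
            then -(ε * ∏ n ∈ Finset.range (2 * k),
              (if (s i' * s i) ^ n * s i' = t then (-1 : ℤˣ) else 1))
            else (ε * ∏ n ∈ Finset.range (2 * k),
              (if (s i' * s i) ^ n * s i' = t then (-1 : ℤˣ) else 1)))) =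
        ε * ∏ n ∈ Finset.range (2 * (k + 1)),
          (if (s i' * s i) ^ n * s i' = t then (-1 : ℤˣ) else 1)
      rw [show 2 * (k + 1) = 2 * k + 1 + 1 from by omega, Finset.prod_range_succ,
        Finset.prod_range_succ]
      simp only [hin, hout]
      split_ifs <;> simp [mul_neg, neg_neg, mul_one, mul_assoc]

lemma sigma_liftable : M.IsLiftable (fun i => (sigma cs i : Equiv.Perm (W × ℤˣ))) := by
  intro i i'
  apply Equiv.ext
  rintro ⟨t, ε⟩
  rw [Equiv.Perm.one_apply]
  rw [sigma_pow_apply cs i i' (M i i') t ε]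
  rw [cs.simple_mul_simple_pow i i', cs.simple_mul_simple_pow' i i', one_mul, mul_one]
  have hprod : (∏ n ∈ Finset.range (2 * M i i'),
      (if (s i' * s i) ^ n * s i' = t then (-1 : ℤˣ) else 1)) = 1 := by
    rw [two_mul, Finset.prod_range_add]
    have : ∀ n : ℕ, (if (s i' * s i) ^ (M i i' + n) * s i' = t then (-1 : ℤˣ) else 1)
        = (if (s i' * s i) ^ n * s i' = t then (-1 : ℤˣ) else 1) := by
      intro n
      rw [pow_add, cs.simple_mul_simple_pow' i i', one_mul]
    rw [Finset.prod_congr rfl (fun n _ => this n)]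
    exact Int.units_mul_self _
  rw [hprod, mul_one]

/-- The parity representation. -/
def theta : W →* Equiv.Perm (W × ℤˣ) := cs.lift ⟨fun i => sigma cs i, sigma_liftable cs⟩

lemma theta_simple (i : B) : theta cs (s i) = sigma cs i :=
  cs.lift_apply_simple (sigma_liftable cs) i

/-- Sign of a reflection along a list of reflections. -/
def wsign (t : W) : List W → ℤˣ
  | [] => 1
  | u :: l => (if u = t then -1 else 1) * wsign t l

lemma wsign_eq_one_of_not_mem (t : W) (l : List W) (h : t ∉ l) : wsign t l = 1 := by
  induction l with
  | nil => rfl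
  | cons u l ih =>
    simp only [List.mem_cons, not_or] at h
    rw [wsign, if_neg (fun hc => h.1 hc.symm), ih h.2, one_mul]

lemma theta_wordProd (ω : List B) (t : W) (ε : ℤˣ) :
    theta cs (π ω) (t, ε) = (π ω * t * (π ω)⁻¹, ε * wsign t (cs.rightInvSeq ω)) := by
  induction ω generalizing t ε with
  | nil => simp [wsign]
  | cons i ω ih =>
    rw [cs.wordProd_cons, map_mul, Equiv.Perm.mul_apply, ih, theta_simple, sigma_apply]
    have hris : cs.rightInvSeq (i :: ω) = ((π ω)⁻¹ * s i * π ω) :: cs.rightInvSeq ω := rfl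
    have hcond : (π ω * t * (π ω)⁻¹ = s i) ↔ ((π ω)⁻¹ * s i * π ω = t) := by
      constructor
      · intro h
        rw [← h]; group
      · intro h
        rw [← h]; group
    rw [hris, Prod.ext_iff]
    constructor
    · show s i * (π ω * t * (π ω)⁻¹) * s i = s i * π ω * t * (s i * π ω)⁻¹
      rw [mul_inv_rev, cs.inv_simple]
      group
    · show (if π ω * t * (π ω)⁻¹ = s i then -(ε * wsign t (cs.rightInvSeq ω))
          else ε * wsign t (cs.rightInvSeq ω))
        = ε * wsign t (((π ω)⁻¹ * s i * π ω) :: cs.rightInvSeq ω)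
      rw [show wsign t (((π ω)⁻¹ * s i * π ω) :: cs.rightInvSeq ω)
        = (if (π ω)⁻¹ * s i * π ω = t then (-1 : ℤˣ) else 1) * wsign t (cs.rightInvSeq ω)
        from rfl]
      simp only [hcond]
      split_ifs <;> simp [mul_neg, neg_neg, mul_one, mul_assoc]

/-- The sign cocycle. -/
def eta (w t : W) : ℤˣ := (theta cs w (t, 1)).2

lemma theta_apply (w t : W) (ε : ℤˣ) :
    theta cs w (t, ε) = (w * t * w⁻¹, ε * eta cs w t) := by
  obtain ⟨ω, rfl⟩ := cs.wordProd_surjective w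
  rw [theta_wordProd, eta, theta_wordProd, one_mul]

lemma eta_wordProd (ω : List B) (t : W) : eta cs (π ω) t = wsign t (cs.rightInvSeq ω) := by
  rw [eta, theta_wordProd, one_mul]

lemma eta_mul (v w t : W) : eta cs (v * w) t = eta cs w t * eta cs v (w * t * w⁻¹) := by
  have : theta cs (v * w) (t, 1) = theta cs v (theta cs w (t, 1)) := by
    rw [map_mul, Equiv.Perm.mul_apply]
  rw [eta, this, theta_apply, theta_apply, one_mul]

@[simp] lemma eta_one (t : W) : eta cs 1 t = 1 := by
  rw [eta, map_one]; rfl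

lemma theta_reflection {t : W} (ht : cs.IsReflection t) (ε : ℤˣ) :
    theta cs t (t, ε) = (t, -ε) := by
  obtain ⟨u, i, rfl⟩ := ht
  have hui : u⁻¹ * (u * s i * u⁻¹) * u = s i := by group
  have hmul : theta cs (u * s i * u⁻¹) (u * s i * u⁻¹, ε)
      = theta cs u (theta cs (s i) (theta cs u⁻¹ (u * s i * u⁻¹, ε))) := by
    rw [← Equiv.Perm.mul_apply, ← Equiv.Perm.mul_apply, ← map_mul, ← map_mul]
  have h1 : theta cs u⁻¹ (u * s i * u⁻¹, ε)
      = (s i, ε * eta cs u⁻¹ (u * s i * u⁻¹)) := by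
    rw [theta_apply]
    congr 1
    rw [show u⁻¹ * (u * s i * u⁻¹) * u⁻¹⁻¹ = u⁻¹ * (u * s i * u⁻¹) * u from by group, hui]
  have h2 : theta cs (s i) (s i, ε * eta cs u⁻¹ (u * s i * u⁻¹))
      = (s i, -(ε * eta cs u⁻¹ (u * s i * u⁻¹))) := by
    rw [theta_simple, sigma_apply]
    have : s i * s i * s i = s i := by rw [cs.simple_mul_simple_self i, one_mul]
    rw [Prod.ext_iff]
    exact ⟨this, by rw [if_pos rfl]⟩
  have h3 : theta cs u (s i, -(ε * eta cs u⁻¹ (u * s i * u⁻¹)))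
      = (u * s i * u⁻¹, -(ε * eta cs u⁻¹ (u * s i * u⁻¹)) * eta cs u (s i)) :=
    theta_apply cs u (s i) _
  have hcancel : eta cs u⁻¹ (u * s i * u⁻¹) * eta cs u (s i) = 1 := by
    have := eta_mul cs u u⁻¹ (u * s i * u⁻¹)
    rw [mul_inv_cancel, eta_one, inv_inv, hui] at this
    exact this.symm
  rw [hmul, h1, h2, h3, Prod.ext_iff]
  refine ⟨rfl, ?_⟩
  show -(ε * eta cs u⁻¹ (u * s i * u⁻¹)) * eta cs u (s i) = -ε
  rw [neg_mul, mul_assoc, hcancel, mul_one]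

lemma eta_mul_reflection (w : W) {t : W} (ht : cs.IsReflection t) :
    eta cs (w * t) t = -eta cs w t := by
  have : theta cs (w * t) (t, 1) = theta cs w (theta cs t (t, 1)) := by
    rw [map_mul, Equiv.Perm.mul_apply]
  rw [eta, this, theta_reflection cs ht, theta_apply]
  simp [eta]

lemma isRightInversion_of_eta {w t : W} (ht : cs.IsReflection t)
    (h : eta cs w t = -1) : cs.IsRightInversion w t := by
  obtain ⟨ω, hred, rfl⟩ := cs.exists_reduced_word' w
  refine ⟨ht, ?_⟩
  rw [eta_wordProd] at h
  have hmem : t ∈ cs.rightInvSeq ω := by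
    by_contra hc
    rw [wsign_eq_one_of_not_mem t _ hc] at h
    exact absurd h (by decide)
  obtain ⟨j, hj, hget⟩ := List.mem_iff_getElem.mp hmem
  have hjlen : j < ω.length := by
    rw [cs.length_rightInvSeq] at hj
    exact hj
  have hgetD : (cs.rightInvSeq ω).getD j 1 = t := by
    rw [List.getD_eq_getElem _ 1 hj, hget]
  have hprod := cs.wordProd_mul_getD_rightInvSeq ω j
  rw [hgetD] at hprod
  rw [hprod]
  calc ℓ (π (ω.eraseIdx j)) ≤ (ω.eraseIdx j).length := cs.length_wordProd_le _
    _ < ω.length := by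
        rw [List.length_eraseIdx_of_lt hjlen]
        omega
    _ = ℓ (π ω) := hred.symm

lemma isRightInversion_iff_eta {w t : W} (ht : cs.IsReflection t) :
    cs.IsRightInversion w t ↔ eta cs w t = -1 := by
  constructor
  · intro h
    rcases Int.units_eq_one_or (eta cs w t) with h1 | h1
    · exfalso
      have h2 : eta cs (w * t) t = -1 := by rw [eta_mul_reflection cs w ht, h1]
      have h3 := (isRightInversion_of_eta cs ht h2).2
      have h4 : w * t * t = w := by rw [mul_assoc, ht.mul_self, mul_one]
      rw [h4] at h3
      exact Nat.lt_asymm h.2 h3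
    · exact h1
  · exact isRightInversion_of_eta cs ht

lemma rightInversion_set_eq (w : W) :
    ∃ F : Finset W, {u : W | cs.IsRightInversion w u} = ↑F ∧ F.card = ℓ w := by
  obtain ⟨ω, hred, rfl⟩ := cs.exists_reduced_word' w
  refine ⟨(cs.rightInvSeq ω).toFinset, ?_, ?_⟩
  · ext u
    simp only [Set.mem_setOf_eq, Finset.coe_sort_coe, Finset.mem_coe, List.mem_toFinset]
    constructor
    · intro hu
      have he : eta cs (π ω) u = -1 := (isRightInversion_iff_eta cs hu.1).mp hu
      rw [eta_wordProd] at he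
      by_contra hc
      rw [wsign_eq_one_of_not_mem u _ hc] at he
      exact absurd he (by decide)
    · intro hu
      exact cs.isRightInversion_of_mem_rightInvSeq hred hu
  · rw [List.toFinset_card_of_nodup (hred.nodup_rightInvSeq), cs.length_rightInvSeq]
    exact hred.symm

end CoxAux

end CoxAux

namespace CoxAux2

open CoxAux

variable {B W : Type*} [Group W] {M : CoxeterMatrix B} (cs : CoxeterSystem M W)

local prefix:100 "s" => cs.simple
local prefix:100 "ℓ" => cs.length

lemma lt_iff_not_rinv {t : W} (ht : cs.IsReflection t) (v : W) :
    (ℓ v < ℓ (t * v)) ↔ ¬ cs.IsRightInversion v⁻¹ t := by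
  have hne : ℓ (t * v) ≠ ℓ v := ht.length_mul_right_ne v
  have hlen : ℓ (v⁻¹ * t) = ℓ (t * v) := by
    rw [← cs.length_inv (v⁻¹ * t), mul_inv_rev, inv_inv, ht.inv]
  constructor
  · intro h hc
    have hc2 := hc.2
    rw [hlen, cs.length_inv] at hc2
    omega
  · intro h
    have : ¬ (ℓ (v⁻¹ * t) < ℓ v⁻¹) := fun hc => h ⟨ht, hc⟩
    rw [hlen, cs.length_inv] at this
    omega

lemma mem_sep_iff (c c' t : W) :
    (cs.IsReflection t ∧ ((ℓ c < ℓ (t * c)) ≠ (ℓ c' < ℓ (t * c')))) ↔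
      cs.IsRightInversion (c⁻¹ * c')⁻¹ (c⁻¹ * t * c) := by
  constructor
  · rintro ⟨ht, hne⟩
    have hrefl : cs.IsReflection (c⁻¹ * t * c) := by
      have := (cs.isReflection_conj_iff c⁻¹ t).mpr ht
      rwa [inv_inv] at this
    have h1 : (ℓ c < ℓ (t * c)) ↔ ¬ (eta cs c⁻¹ t = -1) := by
      rw [lt_iff_not_rinv cs ht c, isRightInversion_iff_eta cs ht]
    have h2 : (ℓ c' < ℓ (t * c')) ↔ ¬ (eta cs c'⁻¹ t = -1) := by
      rw [lt_iff_not_rinv cs ht c', isRightInversion_iff_eta cs ht]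
    have hco : eta cs c'⁻¹ t = eta cs c⁻¹ t * eta cs ((c⁻¹ * c')⁻¹) (c⁻¹ * t * c) := by
      have h3 := eta_mul cs ((c⁻¹ * c')⁻¹) c⁻¹ t
      rw [show (c⁻¹ * c')⁻¹ * c⁻¹ = c'⁻¹ from by group,
        show c⁻¹ * t * c⁻¹⁻¹ = c⁻¹ * t * c from by rw [inv_inv]] at h3
      exact h3
    have hneq : eta cs c⁻¹ t ≠ eta cs c'⁻¹ t := by
      intro hc
      rw [h1, h2, hc] at hne
      exact hne rfl
    rw [isRightInversion_iff_eta cs hrefl]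
    rcases Int.units_eq_one_or (eta cs ((c⁻¹ * c')⁻¹) (c⁻¹ * t * c)) with h4 | h4
    · exfalso
      rw [h4, mul_one] at hco
      exact hneq hco.symm
    · exact h4
  · rintro ⟨hrefl, hlt⟩
    have ht : cs.IsReflection t := by
      have := (cs.isReflection_conj_iff c⁻¹ t).mp (by rwa [inv_inv])
      exact this
    refine ⟨ht, ?_⟩
    have hco : eta cs c'⁻¹ t = eta cs c⁻¹ t * eta cs ((c⁻¹ * c')⁻¹) (c⁻¹ * t * c) := by
      have h3 := eta_mul cs ((c⁻¹ * c')⁻¹) c⁻¹ t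
      rw [show (c⁻¹ * c')⁻¹ * c⁻¹ = c'⁻¹ from by group,
        show c⁻¹ * t * c⁻¹⁻¹ = c⁻¹ * t * c from by rw [inv_inv]] at h3
      exact h3
    have h4 : eta cs ((c⁻¹ * c')⁻¹) (c⁻¹ * t * c) = -1 :=
      (isRightInversion_iff_eta cs hrefl).mp ⟨hrefl, hlt⟩
    have h1 : (ℓ c < ℓ (t * c)) ↔ ¬ (eta cs c⁻¹ t = -1) := by
      rw [lt_iff_not_rinv cs ht c, isRightInversion_iff_eta cs ht]
    have h2 : (ℓ c' < ℓ (t * c')) ↔ ¬ (eta cs c'⁻¹ t = -1) := by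
      rw [lt_iff_not_rinv cs ht c', isRightInversion_iff_eta cs ht]
    rw [h1, h2, hco, h4]
    rcases Int.units_eq_one_or (eta cs c⁻¹ t) with h5 | h5 <;> rw [h5] <;> simp

lemma sep_eq_image (c c' : W) :
    {t : W | cs.IsReflection t ∧ ((ℓ c < ℓ (t * c)) ≠ (ℓ c' < ℓ (t * c')))} =
      (fun u => c * u * c⁻¹) '' {u : W | cs.IsRightInversion (c⁻¹ * c')⁻¹ u} := by
  ext t
  simp only [Set.mem_setOf_eq, Set.mem_image]
  rw [mem_sep_iff cs c c' t]
  constructor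
  · intro h
    exact ⟨c⁻¹ * t * c, h, by group⟩
  · rintro ⟨u, hu, rfl⟩
    rwa [show c⁻¹ * (c * u * c⁻¹) * c = u from by group]

lemma sep_card (c c' : W) :
    ∃ F : Finset W,
      {t : W | cs.IsReflection t ∧ ((ℓ c < ℓ (t * c)) ≠ (ℓ c' < ℓ (t * c')))} = ↑F ∧
      F.card = ℓ (c⁻¹ * c') := by
  classical
  obtain ⟨F₀, hF₀, hcard₀⟩ := rightInversion_set_eq cs (c⁻¹ * c')⁻¹
  refine ⟨F₀.image (fun u => c * u * c⁻¹), ?_, ?_⟩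
  · rw [sep_eq_image cs c c', hF₀, Finset.coe_image]
  · rw [Finset.card_image_of_injective _ (fun x y hxy => by
      have : c⁻¹ * (c * x * c⁻¹) * c = c⁻¹ * (c * y * c⁻¹) * c := by rw [hxy]
      rwa [show c⁻¹ * (c * x * c⁻¹) * c = x from by group,
        show c⁻¹ * (c * y * c⁻¹) * c = y from by group] at this), hcard₀,
      cs.length_inv]

end CoxAux2

open CoxAux CoxAux2 in
theorem coxeter_gallery_distance_separating_walls_and_negative_type'
    {B W : Type*} [Group W] {M : CoxeterMatrix B} (cs : CoxeterSystem M W) :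
    (∀ c c' : W, cs.length (c⁻¹ * c') =
      Set.ncard {t : W | cs.IsReflection t ∧
        ((cs.length c < cs.length (t * c)) ≠
          (cs.length c' < cs.length (t * c')))}) ∧
    (∀ (m : ℕ) (c : Fin m → W) (t : Fin m → ℝ), (∑ i, t i) = 0 →
      ∑ i, ∑ j, t i * t j * (cs.length ((c i)⁻¹ * c j) : ℝ) ≤ 0) := by
  classical
  have part1 : ∀ c c' : W, cs.length (c⁻¹ * c') =
      Set.ncard {t : W | cs.IsReflection t ∧
        ((cs.length c < cs.length (t * c)) ≠
          (cs.length c' < cs.length (t * c')))} := by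
    intro c c'
    obtain ⟨F, hF, hcard⟩ := sep_card cs c c'
    rw [hF, Set.ncard_coe_finset]
    exact hcard.symm
  refine ⟨part1, ?_⟩
  intro m c tt htt
  obtain ⟨F, hF, hcard⟩ : ∃ F : Fin m → Fin m → Finset W,
      (∀ i j, {t : W | cs.IsReflection t ∧
        ((cs.length (c i) < cs.length (t * c i)) ≠
          (cs.length (c j) < cs.length (t * c j)))} = ↑(F i j)) ∧
      (∀ i j, (F i j).card = cs.length ((c i)⁻¹ * c j)) := by
    have h := fun (i j : Fin m) => sep_card cs (c i) (c j)
    choose F h1 h2 using h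
    exact ⟨F, h1, h2⟩
  set T : Finset W := Finset.univ.biUnion (fun p : Fin m × Fin m => F p.1 p.2) with hT
  set g : Fin m → W → ℝ :=
    fun i x => if cs.length (c i) < cs.length (x * c i) then 1 else 0 with hg
  have key : ∀ i j, (cs.length ((c i)⁻¹ * c j) : ℝ) = ∑ x ∈ T, (g i x - g j x) ^ 2 := by
    intro i j
    rw [← hcard i j]
    have hsub : F i j ⊆ T := fun x hx =>
      Finset.mem_biUnion.mpr ⟨(i, j), Finset.mem_univ _, hx⟩
    calc ((F i j).card : ℝ) = ∑ x ∈ T, (if x ∈ F i j then (1 : ℝ) else 0) := by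
          rw [Finset.sum_ite_mem, Finset.inter_eq_right.mpr hsub, Finset.sum_const,
            nsmul_eq_mul, mul_one]
      _ = ∑ x ∈ T, (g i x - g j x) ^ 2 := by
          refine Finset.sum_congr rfl fun x hxT => ?_
          have hrefl : cs.IsReflection x := by
            obtain ⟨p, _, hp⟩ := Finset.mem_biUnion.mp hxT
            have hx : x ∈ {t : W | cs.IsReflection t ∧
                ((cs.length (c p.1) < cs.length (t * c p.1)) ≠
                  (cs.length (c p.2) < cs.length (t * c p.2)))} := by
              rw [hF p.1 p.2]
              exact hp
            exact hx.1
          by_cases hmem : x ∈ F i j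
          · rw [if_pos hmem]
            have hx : x ∈ {t : W | cs.IsReflection t ∧
                ((cs.length (c i) < cs.length (t * c i)) ≠
                  (cs.length (c j) < cs.length (t * c j)))} := by
              rw [hF i j]
              exact hmem
            have hne := hx.2
            by_cases hP : cs.length (c i) < cs.length (x * c i)
            · have hQ : ¬ (cs.length (c j) < cs.length (x * c j)) := fun hq =>
                hne (eq_iff_iff.mpr (iff_of_true hP hq))
              rw [hg]
              simp only [if_pos hP, if_neg hQ]
              norm_num
            · have hQ : cs.length (c j) < cs.length (x * c j) := by
                by_contra hq
                exact hne (eq_iff_iff.mpr (iff_of_false hP hq))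
              rw [hg]
              simp only [if_neg hP, if_pos hQ]
              norm_num
          · rw [if_neg hmem]
            have hPQ : (cs.length (c i) < cs.length (x * c i)) =
                (cs.length (c j) < cs.length (x * c j)) := by
              by_contra hc
              apply hmem
              have : x ∈ {t : W | cs.IsReflection t ∧
                  ((cs.length (c i) < cs.length (t * c i)) ≠
                    (cs.length (c j) < cs.length (t * c j)))} := ⟨hrefl, hc⟩
              rw [hF i j] at this
              exact this
            rw [hg]
            simp only [hPQ, sub_self]
            norm_num
  have inner_le : ∀ x ∈ T, (∑ i, ∑ j, tt i * tt j * (g i x - g j x) ^ 2) ≤ 0 := by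
    intro x _
    set X := ∑ i, tt i * g i x with hXdef
    set Y := ∑ j, tt j * (g j x) ^ 2 with hYdef
    have h1 : ∀ i : Fin m, ∑ j, tt i * tt j * (g i x - g j x) ^ 2
        = tt i * Y - 2 * (tt i * g i x) * X := by
      intro i
      calc ∑ j, tt i * tt j * (g i x - g j x) ^ 2
          = ∑ j, ((tt i * (g i x) ^ 2) * tt j + tt i * (tt j * (g j x) ^ 2)
              - 2 * (tt i * g i x) * (tt j * g j x)) :=
            Finset.sum_congr rfl fun j _ => by ring
        _ = (tt i * (g i x) ^ 2) * (∑ j, tt j) + tt i * Y - 2 * (tt i * g i x) * X := by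
            rw [Finset.sum_sub_distrib, Finset.sum_add_distrib, ← Finset.mul_sum,
              ← Finset.mul_sum, ← Finset.mul_sum]
        _ = tt i * Y - 2 * (tt i * g i x) * X := by rw [htt]; ring
    calc (∑ i, ∑ j, tt i * tt j * (g i x - g j x) ^ 2)
        = ∑ i, (tt i * Y - 2 * (tt i * g i x) * X) :=
          Finset.sum_congr rfl fun i _ => h1 i
      _ = (∑ i, tt i) * Y - 2 * X * X := by
          rw [Finset.sum_sub_distrib, ← Finset.sum_mul]
          congr 1
          calc ∑ i, 2 * (tt i * g i x) * X = ∑ i, (tt i * g i x) * (2 * X) :=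
                Finset.sum_congr rfl fun i _ => by ring
            _ = (∑ i, tt i * g i x) * (2 * X) := by rw [← Finset.sum_mul]
            _ = 2 * X * X := by rw [← hXdef]; ring
      _ = - (2 * X * X) := by rw [htt]; ring
      _ ≤ 0 := by nlinarith [mul_self_nonneg X]
  calc ∑ i, ∑ j, tt i * tt j * (cs.length ((c i)⁻¹ * c j) : ℝ)
      = ∑ i, ∑ j, ∑ x ∈ T, tt i * tt j * (g i x - g j x) ^ 2 := by
        refine Finset.sum_congr rfl fun i _ => Finset.sum_congr rfl fun j _ => ?_
        rw [key i j, Finset.mul_sum]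
    _ = ∑ i, ∑ x ∈ T, ∑ j, tt i * tt j * (g i x - g j x) ^ 2 :=
        Finset.sum_congr rfl fun i _ => Finset.sum_comm
    _ = ∑ x ∈ T, ∑ i, ∑ j, tt i * tt j * (g i x - g j x) ^ 2 := Finset.sum_comm
    _ ≤ 0 := Finset.sum_nonpos inner_le


/-- For a Coxeter system `(W,S)`, the gallery distance `d(c,c′) = ℓ(c⁻¹c′)`
between chambers of the Coxeter complex equals the number of walls separating
`c` and `c′` (a wall, given by a reflection `t`, separates `c` and `c′` when
exactly one of them lies in the half-space `{v | ℓ(tv) > ℓ(v)}`); consequently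
the gallery distance is a kernel of negative type on the set of chambers. -/
theorem coxeter_gallery_distance_separating_walls_and_negative_type
    {B W : Type*} [Group W] {M : CoxeterMatrix B} (cs : CoxeterSystem M W) :
    (∀ c c' : W, cs.length (c⁻¹ * c') =
      Set.ncard {t : W | cs.IsReflection t ∧
        ((cs.length c < cs.length (t * c)) ≠
          (cs.length c' < cs.length (t * c')))}) ∧
    (∀ (m : ℕ) (c : Fin m → W) (t : Fin m → ℝ), (∑ i, t i) = 0 →
      ∑ i, ∑ j, t i * t j * (cs.length ((c i)⁻¹ * c j) : ℝ) ≤ 0) :=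
  coxeter_gallery_distance_separating_walls_and_negative_type' cs
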